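/- Let g : [0,1] → ℝ be of bounded variation and left-continuous on (0,1), and let A ⊆ (0,1) be a dense set of continuity points of g. Then for every x ∈ (0,1], V_0^x(g) = sup{S(g,Z) : Z a partition of [0,x] with all interior points in A}, where S(g,Z) = Σ |g(x_i) - g(x_{i-1})|. -/

import Mathlib

def IsPartitionOf (n : ℕ) (xs : ℕ → ℝ) (a b : ℝ) : Prop :=
  xs 0 = a ∧ xs n = b ∧ ∀ i < n, xs i < xs (i + 1)

lemma aux_abs_le_sum (g : ℝ → ℝ) (xs : ℕ → ℝ) (j : ℕ) :
    ∀ k, j ≤ k → |g (xs k) - g (xs j)| ≤ ∑ i ∈ Finset.Ico j k, |g (xs (i+1)) - g (xs i)| := by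
  intro k
  induction k with
  | zero => intro h; obtain rfl : j = 0 := Nat.le_zero.mp h; simp
  | succ k ih =>
    intro h
    rcases eq_or_lt_of_le h with rfl | h'
    · simp
    · have hjk : j ≤ k := Nat.lt_succ_iff.mp h'
      rw [Finset.sum_Ico_succ_top hjk]
      have h1 : |g (xs (k+1)) - g (xs j)| ≤ |g (xs (k+1)) - g (xs k)| + |g (xs k) - g (xs j)| :=
        abs_sub_le _ _ _
      have h2 := ih hjk
      linarith

lemma aux_sum_blocks (f : ℕ → ℝ) (p : ℕ → ℕ) (hp : ∀ i, p i ≤ p (i+1)) (n : ℕ) :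
    ∑ i ∈ Finset.range n, ∑ j ∈ Finset.Ico (p i) (p (i+1)), f j
      = ∑ j ∈ Finset.Ico (p 0) (p n), f j := by
  have hpm : Monotone p := monotone_nat_of_le_succ hp
  induction n with
  | zero => simp
  | succ n ih =>
    rw [Finset.sum_range_succ, ih, Finset.sum_Ico_consecutive _ (hpm (Nat.zero_le n)) (hp n)]

lemma partition_lt {m : ℕ} {xs : ℕ → ℝ} {a b : ℝ} (hP : IsPartitionOf m xs a b) :
    ∀ k, k ≤ m → ∀ j, j < k → xs j < xs k := by
  intro k
  induction k with
  | zero => omega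
  | succ k ih =>
    intro hkm j hjk
    rcases Nat.lt_succ_iff_lt_or_eq.mp hjk with h | rfl
    · exact (ih (by omega) j h).trans (hP.2.2 k (by omega))
    · exact hP.2.2 j (by omega)

lemma partition_le {m : ℕ} {xs : ℕ → ℝ} {a b : ℝ} (hP : IsPartitionOf m xs a b) :
    ∀ k, k ≤ m → ∀ j, j ≤ k → xs j ≤ xs k := by
  intro k hkm j hjk
  rcases eq_or_lt_of_le hjk with rfl | h
  · exact le_rfl
  · exact (partition_lt hP k hkm j h).le


lemma existsPartition (g : ℝ → ℝ) {x : ℝ} (hx : 0 < x) (n : ℕ) (u : ℕ → ℝ)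
    (hu : Monotone u) (us : ∀ i, u i ∈ Set.Icc 0 x) :
    ∃ m xs, IsPartitionOf m xs 0 x ∧ 1 ≤ m ∧
      ∑ i ∈ Finset.range n, |g (u (i+1)) - g (u i)|
        ≤ ∑ i ∈ Finset.range m, |g (xs (i+1)) - g (xs i)| := by
  classical
  set F : Finset ℝ := ((Finset.range (n+1)).image u) ∪ {0, x} with hF
  have h0F : (0:ℝ) ∈ F := by simp [hF]
  have hxF : x ∈ F := by simp [hF]
  have hFmem : ∀ y ∈ F, y ∈ Set.Icc 0 x := by
    intro y hy
    simp only [hF, Finset.mem_union, Finset.mem_image, Finset.mem_range,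
      Finset.mem_insert, Finset.mem_singleton] at hy
    rcases hy with ⟨i, _, rfl⟩ | rfl | rfl
    · exact us i
    · exact ⟨le_rfl, hx.le⟩
    · exact ⟨hx.le, le_rfl⟩
  have hcard2 : 2 ≤ F.card := by
    have : ({0, x} : Finset ℝ) ⊆ F := by
      intro y hy
      simp only [Finset.mem_insert, Finset.mem_singleton] at hy
      rcases hy with rfl | rfl
      exacts [h0F, hxF]
    have h2 : ({0, x} : Finset ℝ).card = 2 := by
      rw [Finset.card_insert_of_notMem (by simp [hx.ne]), Finset.card_singleton]
    exact h2 ▸ Finset.card_le_card this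
  obtain ⟨m, hm⟩ : ∃ m, F.card = m + 1 := ⟨F.card - 1, by omega⟩
  have hm1 : 1 ≤ m := by omega
  set e := F.orderIsoOfFin rfl with he
  set xs : ℕ → ℝ := fun i => if h : i < F.card then (e ⟨i, h⟩ : ℝ) else x with hxs
  have hxsF : ∀ i (h : i < F.card), xs i ∈ F := by
    intro i h; simp only [hxs, dif_pos h]; exact (e ⟨i, h⟩).2
  have hxs_lt : ∀ i j (hi : i < F.card) (hj : j < F.card), i < j → xs i < xs j := by
    intro i j hi hj hij
    simp only [hxs, dif_pos hi, dif_pos hj]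
    exact Subtype.coe_lt_coe.mpr (e.strictMono (show (⟨i, hi⟩ : Fin F.card) < ⟨j, hj⟩ from hij))
  have hxs_le : ∀ i j (hi : i < F.card) (hj : j < F.card), i ≤ j → xs i ≤ xs j := by
    intro i j hi hj hij
    rcases eq_or_lt_of_le hij with rfl | h
    · exact le_rfl
    · exact (hxs_lt i j hi hj h).le
  -- every element of F is some xs i
  have hFxs : ∀ y ∈ F, ∃ i, ∃ h : i < F.card, xs i = y := by
    intro y hy
    refine ⟨(e.symm ⟨y, hy⟩ : Fin F.card), (e.symm ⟨y, hy⟩).2, ?_⟩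
    simp only [hxs, dif_pos (e.symm ⟨y, hy⟩).2]
    have : e ⟨(e.symm ⟨y, hy⟩ : Fin F.card), (e.symm ⟨y, hy⟩).2⟩ = e (e.symm ⟨y, hy⟩) := by
      congr 1
    rw [this, e.apply_symm_apply]
  have h0c : 0 < F.card := by omega
  have hmc : m < F.card := by omega
  have hxs0 : xs 0 = 0 := by
    obtain ⟨i, hi, hxi⟩ := hFxs 0 h0F
    have h1 : xs 0 ≤ xs i := hxs_le 0 i h0c hi (Nat.zero_le i)
    have h2 : (0:ℝ) ≤ xs 0 := (hFmem _ (hxsF 0 h0c)).1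
    rw [hxi] at h1
    linarith
  have hxsm : xs m = x := by
    obtain ⟨i, hi, hxi⟩ := hFxs x hxF
    have h1 : xs i ≤ xs m := hxs_le i m hi hmc (by omega)
    have h2 : xs m ≤ x := (hFmem _ (hxsF m hmc)).2
    rw [hxi] at h1
    linarith
  have hPart : IsPartitionOf m xs 0 x :=
    ⟨hxs0, hxsm, fun i hi => hxs_lt i (i+1) (by omega) (by omega) (Nat.lt_succ_self i)⟩
  -- index map
  have humem : ∀ i, u (min i n) ∈ F := by
    intro i
    simp only [hF, Finset.mem_union, Finset.mem_image, Finset.mem_range]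
    exact Or.inl ⟨min i n, by omega, rfl⟩
  set p : ℕ → ℕ := fun i => ((e.symm ⟨u (min i n), humem i⟩ : Fin F.card) : ℕ) with hp
  have hpc : ∀ i, p i < F.card := fun i => (e.symm ⟨u (min i n), humem i⟩).2
  have hpmono : ∀ i, p i ≤ p (i+1) := by
    intro i
    have hle : u (min i n) ≤ u (min (i+1) n) := hu (by omega)
    have : e.symm ⟨u (min i n), humem i⟩ ≤ e.symm ⟨u (min (i+1) n), humem (i+1)⟩ :=
      e.symm.monotone (Subtype.mk_le_mk.mpr hle)
    exact this
  have hxsp : ∀ i, xs (p i) = u (min i n) := by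
    intro i
    simp only [hxs, dif_pos (hpc i)]
    have : (⟨p i, hpc i⟩ : Fin F.card) = e.symm ⟨u (min i n), humem i⟩ := by
      apply Fin.ext; rfl
    rw [this, e.apply_symm_apply]
  -- the sum bound
  refine ⟨m, xs, hPart, hm1, ?_⟩
  have key : ∀ i ∈ Finset.range n, |g (u (i+1)) - g (u i)|
      ≤ ∑ j ∈ Finset.Ico (p i) (p (i+1)), |g (xs (j+1)) - g (xs j)| := by
    intro i hi
    simp only [Finset.mem_range] at hi
    have h1 : u i = xs (p i) := by rw [hxsp i, min_eq_left (by omega)]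
    have h2 : u (i+1) = xs (p (i+1)) := by rw [hxsp (i+1), min_eq_left (by omega)]
    rw [h1, h2]
    exact aux_abs_le_sum g xs (p i) (p (i+1)) (hpmono i)
  calc ∑ i ∈ Finset.range n, |g (u (i+1)) - g (u i)|
      ≤ ∑ i ∈ Finset.range n, ∑ j ∈ Finset.Ico (p i) (p (i+1)), |g (xs (j+1)) - g (xs j)| :=
        Finset.sum_le_sum key
    _ = ∑ j ∈ Finset.Ico (p 0) (p n), |g (xs (j+1)) - g (xs j)| :=
        aux_sum_blocks _ p hpmono n
    _ ≤ ∑ j ∈ Finset.range m, |g (xs (j+1)) - g (xs j)| := by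
        apply Finset.sum_le_sum_of_subset_of_nonneg
        · intro j hj
          simp only [Finset.mem_Ico] at hj
          simp only [Finset.mem_range]
          have := hpc n
          omega
        · intro j _ _; exact abs_nonneg _
lemma perturb (g : ℝ → ℝ) (A : Set ℝ)
    (hdense : ∀ y ∈ Set.Ioo (0:ℝ) 1, y ∈ closure A)
    (hlc : ∀ y ∈ Set.Ioo (0:ℝ) 1,
      Filter.Tendsto g (nhdsWithin y (Set.Iio y)) (nhds (g y)))
    {x : ℝ} (hx : 0 < x) (hx1 : x ≤ 1) {m : ℕ} {xs : ℕ → ℝ}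
    (hP : IsPartitionOf m xs 0 x) (hm : 1 ≤ m) {ε : ℝ} (hε : 0 < ε) :
    ∃ ys, IsPartitionOf m ys 0 x ∧ (∀ i, 0 < i → i < m → ys i ∈ A) ∧
      ∑ i ∈ Finset.range m, |g (xs (i+1)) - g (xs i)| - ε
        ≤ ∑ i ∈ Finset.range m, |g (ys (i+1)) - g (ys i)| := by
  classical
  obtain ⟨hxs0, hxsm, hstep⟩ := hP
  have hP' : IsPartitionOf m xs 0 x := ⟨hxs0, hxsm, hstep⟩
  set δ := ε / (2 * m) with hδ
  have hmR : (0:ℝ) < m := by exact_mod_cast hm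
  have hδpos : 0 < δ := by positivity
  have claim : ∀ i, 0 < i → i < m →
      ∃ a, a ∈ A ∧ xs (i-1) < a ∧ a < xs i ∧ |g a - g (xs i)| < δ := by
    intro i hi0 him
    have hxi_pos : 0 < xs i := by
      have := partition_lt hP' i him.le 0 hi0
      linarith [hxs0 ▸ this]
    have hxi_ltx : xs i < x := hxsm ▸ partition_lt hP' m le_rfl i him
    have hxiIoo : xs i ∈ Set.Ioo (0:ℝ) 1 := ⟨hxi_pos, lt_of_lt_of_le hxi_ltx hx1⟩
    obtain ⟨d, hd0, hd⟩ := Metric.tendsto_nhdsWithin_nhds.mp (hlc (xs i) hxiIoo) δ hδpos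
    have hprev : xs (i-1) < xs i := partition_lt hP' i him.le (i-1) (by omega)
    set c := max (xs (i-1)) (xs i - d) with hc
    have hc_lt : c < xs i := by
      apply max_lt hprev
      linarith
    have hc0 : 0 ≤ c := by
      have h0 : (0:ℝ) ≤ xs (i-1) := by
        rcases Nat.eq_zero_or_pos (i-1) with h | h
        · rw [h, hxs0]
        · linarith [hxs0 ▸ partition_lt hP' (i-1) (by omega) 0 h]
      exact le_trans h0 (le_max_left _ _)
    set y := (c + xs i) / 2 with hy
    have hy_mem : y ∈ Set.Ioo c (xs i) := ⟨by rw [hy]; linarith, by rw [hy]; linarith⟩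
    have hy01 : y ∈ Set.Ioo (0:ℝ) 1 := ⟨by linarith [hy_mem.1], by linarith [hy_mem.2, hxiIoo.2]⟩
    obtain ⟨a, haI, haA⟩ := _root_.mem_closure_iff.mp (hdense y hy01)
      (Set.Ioo c (xs i)) isOpen_Ioo hy_mem
    refine ⟨a, haA, lt_of_le_of_lt (le_max_left _ _) haI.1, haI.2, ?_⟩
    apply hd haI.2
    rw [Real.dist_eq, abs_of_neg (by linarith [haI.2] : a - xs i < 0)]
    have hcd : xs i - d ≤ c := le_max_right _ _
    linarith [haI.1]
  set ys : ℕ → ℝ := fun i =>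
    if h : 0 < i ∧ i < m then (claim i h.1 h.2).choose
    else if i = 0 then 0 else x with hys
  have hys0 : ys 0 = 0 := by simp [hys]
  have hysm : ys m = x := by
    simp only [hys]
    rw [dif_neg (by omega), if_neg (by omega)]
  have hysA : ∀ i, 0 < i → i < m → ys i ∈ A := by
    intro i hi0 him
    simp only [hys, dif_pos (⟨hi0, him⟩ : 0 < i ∧ i < m)]
    exact (claim i hi0 him).choose_spec.1
  have hys_spec : ∀ i (hi0 : 0 < i) (him : i < m),
      xs (i-1) < ys i ∧ ys i < xs i ∧ |g (ys i) - g (xs i)| < δ := by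
    intro i hi0 him
    have heq : ys i = (claim i hi0 him).choose := by
      simp only [hys, dif_pos (⟨hi0, him⟩ : 0 < i ∧ i < m)]
    rw [heq]
    exact (claim i hi0 him).choose_spec.2
  have hys_close : ∀ i, i ≤ m → |g (ys i) - g (xs i)| ≤ δ := by
    intro i him
    rcases Nat.eq_zero_or_pos i with rfl | hi0
    · rw [hys0, hxs0]; simp [hδpos.le]
    · rcases eq_or_lt_of_le him with rfl | h
      · rw [hysm, hxsm]; simp [hδpos.le]
      · exact (hys_spec i hi0 h).2.2.le
  have hysstep : ∀ i < m, ys i < ys (i+1) := by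
    intro i hi
    rcases Nat.eq_zero_or_pos i with rfl | hi0
    · rcases eq_or_lt_of_le (Nat.one_le_iff_ne_zero.mpr (by omega) : 1 ≤ m) with h1 | h1
      · have hg : ys (0+1) = x := by rw [show (0+1 : ℕ) = m by omega, hysm]
        rw [hys0, hg]; exact hx
      · have := (hys_spec 1 one_pos h1).1
        simp only [Nat.sub_self] at this
        rw [hys0]
        calc (0:ℝ) = xs 0 := hxs0.symm
          _ < ys 1 := this
    · rcases eq_or_lt_of_le (Nat.succ_le_of_lt hi) with h1 | h1
      · -- i+1 = m
        have h2 : ys i < xs i := (hys_spec i hi0 hi).2.1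
        have h3 : xs i < xs m := partition_lt hP' m le_rfl i hi
        have hg : ys (i+1) = x := by rw [show (i+1 : ℕ) = m by omega, hysm]
        rw [hxsm] at h3
        rw [hg]
        linarith
      · have h2 : ys i < xs i := (hys_spec i hi0 hi).2.1
        have h3 := (hys_spec (i+1) (by omega) h1).1
        simp only [Nat.add_sub_cancel] at h3
        linarith
  refine ⟨ys, ⟨hys0, hysm, hysstep⟩, hysA, ?_⟩
  have perterm : ∀ i ∈ Finset.range m,
      |g (xs (i+1)) - g (xs i)| - 2*δ ≤ |g (ys (i+1)) - g (ys i)| := by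
    intro i hi
    simp only [Finset.mem_range] at hi
    have t1 : |g (ys (i+1)) - g (xs (i+1))| ≤ δ := hys_close (i+1) hi
    have t2 : |g (ys i) - g (xs i)| ≤ δ := hys_close i hi.le
    have h1 : |g (xs (i+1)) - g (xs i)|
        ≤ |g (xs (i+1)) - g (ys (i+1))| + |g (ys (i+1)) - g (xs i)| := abs_sub_le _ _ _
    have h2 : |g (ys (i+1)) - g (xs i)|
        ≤ |g (ys (i+1)) - g (ys i)| + |g (ys i) - g (xs i)| := abs_sub_le _ _ _
    have h3 : |g (xs (i+1)) - g (ys (i+1))| = |g (ys (i+1)) - g (xs (i+1))| := abs_sub_comm _ _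
    linarith
  have hconst : ∑ _i ∈ Finset.range m, (2*δ) = ε := by
    rw [Finset.sum_const, Finset.card_range, nsmul_eq_mul, hδ]
    field_simp
  calc ∑ i ∈ Finset.range m, |g (xs (i+1)) - g (xs i)| - ε
      = ∑ i ∈ Finset.range m, (|g (xs (i+1)) - g (xs i)| - 2*δ) := by
        rw [Finset.sum_sub_distrib, hconst]
    _ ≤ ∑ i ∈ Finset.range m, |g (ys (i+1)) - g (ys i)| := Finset.sum_le_sum perterm
/-- For g of bounded variation, left-continuous on (0,1), and a
dense set A of continuity points, the variation V₀ˣ(g) is the supremum of the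
variation sums over partitions of [0,x] with all interior points in A. -/
theorem variation_eq_sup_over_partitions_from_dense (g : ℝ → ℝ) (A : Set ℝ)
    (hbv : BoundedVariationOn g (Set.Icc 0 1))
    (hlc : ∀ x ∈ Set.Ioo (0:ℝ) 1,
      Filter.Tendsto g (nhdsWithin x (Set.Iio x)) (nhds (g x)))
    (hA : A ⊆ Set.Ioo 0 1)
    (hdense : ∀ x ∈ Set.Ioo (0:ℝ) 1, x ∈ closure A)
    (hcont : ∀ x ∈ A, ContinuousAt g x) :
    ∀ x : ℝ, 0 < x → x ≤ 1 →
      variationOnFromTo g (Set.Icc 0 x) 0 x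
        = sSup {s : ℝ | ∃ (n : ℕ) (xs : ℕ → ℝ), IsPartitionOf n xs 0 x ∧
            (∀ i : ℕ, 0 < i → i < n → xs i ∈ A) ∧
            s = ∑ i ∈ Finset.range n, |g (xs (i + 1)) - g (xs i)|} := by
  intro x hx0 hx1
  classical
  set S : Set ℝ := {s : ℝ | ∃ (n : ℕ) (xs : ℕ → ℝ), IsPartitionOf n xs 0 x ∧
            (∀ i : ℕ, 0 < i → i < n → xs i ∈ A) ∧
            s = ∑ i ∈ Finset.range n, |g (xs (i + 1)) - g (xs i)|} with hS
  have hsub : Set.Icc (0:ℝ) x ⊆ Set.Icc 0 1 := Set.Icc_subset_Icc le_rfl hx1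
  have hfin : eVariationOn g (Set.Icc 0 x) ≠ ⊤ := by
    intro h
    exact hbv (top_le_iff.mp (h ▸ eVariationOn.mono g hsub))
  have hVrw : variationOnFromTo g (Set.Icc 0 x) 0 x
      = (eVariationOn g (Set.Icc 0 x)).toReal := by
    rw [variationOnFromTo.eq_of_le g _ hx0.le, Set.inter_self]
  have hub : ∀ s ∈ S, s ≤ (eVariationOn g (Set.Icc 0 x)).toReal := by
    rintro s ⟨n, xs, hP, -, rfl⟩
    set u : ℕ → ℝ := fun i => xs (min i n) with hu
    have humono : Monotone u := fun i j hij =>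
      partition_le hP (min j n) (min_le_right _ _) (min i n) (min_le_min hij le_rfl)
    have humem : ∀ i, u i ∈ Set.Icc 0 x := by
      intro i
      constructor
      · have h := partition_le hP (min i n) (min_le_right _ _) 0 (Nat.zero_le _)
        rw [hP.1] at h; exact h
      · have h := partition_le hP n le_rfl (min i n) (min_le_right _ _)
        rw [hP.2.1] at h; exact h
    have hle := eVariationOn.sum_le (f := g) (n := n) humono humem
    have hconv : ∑ i ∈ Finset.range n, edist (g (u (i+1))) (g (u i))
        = ENNReal.ofReal (∑ i ∈ Finset.range n, |g (xs (i+1)) - g (xs i)|) := by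
      rw [ENNReal.ofReal_sum_of_nonneg (fun i _ => abs_nonneg _)]
      apply Finset.sum_congr rfl
      intro i hi
      simp only [Finset.mem_range] at hi
      have e1 : u (i+1) = xs (i+1) := by simp only [hu]; rw [min_eq_left (by omega)]
      have e2 : u i = xs i := by simp only [hu]; rw [min_eq_left (by omega)]
      rw [e1, e2, edist_dist, Real.dist_eq]
    rw [hconv] at hle
    have h2 := ENNReal.toReal_mono hfin hle
    rwa [ENNReal.toReal_ofReal (Finset.sum_nonneg fun i _ => abs_nonneg _)] at h2
  have hbdd : BddAbove S := ⟨(eVariationOn g (Set.Icc 0 x)).toReal, fun s hs => hub s hs⟩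
  have hmem1 : |g x - g 0| ∈ S := by
    refine ⟨1, fun i => if i = 0 then 0 else x, ⟨by simp, by simp, ?_⟩, ?_, by simp⟩
    · intro i hi
      interval_cases i
      simpa using hx0
    · intro i h1 h2
      exact absurd h2 (by omega)
  have hne : S.Nonempty := ⟨_, hmem1⟩
  have h0S : 0 ≤ sSup S := le_trans (abs_nonneg _) (le_csSup hbdd hmem1)
  have hlow : eVariationOn g (Set.Icc 0 x) ≤ ENNReal.ofReal (sSup S) := by
    rw [eVariationOn]
    apply iSup_le
    rintro ⟨n, u, hu, us⟩
    dsimp only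
    have hconv : ∑ i ∈ Finset.range n, edist (g (u (i+1))) (g (u i))
        = ENNReal.ofReal (∑ i ∈ Finset.range n, |g (u (i+1)) - g (u i)|) := by
      rw [ENNReal.ofReal_sum_of_nonneg (fun i _ => abs_nonneg _)]
      exact Finset.sum_congr rfl fun i _ => by rw [edist_dist, Real.dist_eq]
    rw [hconv]
    apply ENNReal.ofReal_le_ofReal
    obtain ⟨m, xs, hP, hm1, hsum⟩ := existsPartition g hx0 n u hu us
    refine le_trans hsum ?_
    refine le_of_forall_pos_le_add ?_
    intro ε hε
    obtain ⟨ys, hPy, hyA, hysum⟩ := perturb g A hdense hlc hx0 hx1 hP hm1 hε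
    have hmemS : (∑ i ∈ Finset.range m, |g (ys (i+1)) - g (ys i)|) ∈ S :=
      ⟨m, ys, hPy, hyA, rfl⟩
    have hcs := le_csSup hbdd hmemS
    linarith
  rw [hVrw]
  apply le_antisymm
  · have h1 := ENNReal.toReal_mono (by simp) hlow
    rwa [ENNReal.toReal_ofReal h0S] at h1
  · exact csSup_le hne hub
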